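/- For 0 ≤ y ≤ x < 1 and parameters α, β, β' > 0 with γ = β + β', the change of variable v = (1−y)u/(1−yu) yields ∫₀¹ u^{α−1}(1−u)^{γ−α−1}(1−xu)^{−β}(1−yu)^{−β'} du = (1−y)^{−α} ∫₀¹ v^{α−1}(1−v)^{γ−α−1}(1 − ((x−y)/(1−y))v)^{−β} dv, assuming γ > α > 0. -/

import Mathlib

open intervalIntegral Real
open MeasureTheory

theorem stmt_9 (α β β' γ x y : ℝ) (hβ : 0 < β) (hβ' : 0 < β') (hγ : γ = β + β')
    (hα : 0 < α) (hαγ : α < γ) (hy : 0 ≤ y) (hyx : y ≤ x) (hx1 : x < 1) :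
    (∫ u in (0:ℝ)..1,
        u ^ (α - 1) * (1 - u) ^ (γ - α - 1) * (1 - x * u) ^ (-β) * (1 - y * u) ^ (-β'))
      = (1 - y) ^ (-α) * ∫ v in (0:ℝ)..1,
          v ^ (α - 1) * (1 - v) ^ (γ - α - 1) * (1 - ((x - y) / (1 - y)) * v) ^ (-β) := by
  have hx0 : 0 ≤ x := hy.trans hyx
  have hy1 : y < 1 := lt_of_le_of_lt hyx hx1
  have h1y : (0:ℝ) < 1 - y := by linarith
  set c : ℝ := (x - y) / (1 - y) with hc
  set φ : ℝ → ℝ := fun u => (1 - y) * u / (1 - y * u) with hφ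
  set φ' : ℝ → ℝ := fun u => (1 - y) / (1 - y * u) ^ 2 with hφ'
  set g : ℝ → ℝ := fun v => v ^ (α - 1) * (1 - v) ^ (γ - α - 1) * (1 - c * v) ^ (-β) with hg
  have hden : ∀ u ∈ Set.Ioo (0:ℝ) 1, (0:ℝ) < 1 - y * u := by
    intro u hu
    nlinarith [hu.1, hu.2]
  have hderiv : ∀ u ∈ Set.Ioo (0:ℝ) 1, HasDerivAt φ (φ' u) u := by
    intro u hu
    have hd := hden u hu
    have h1 : HasDerivAt (fun u : ℝ => (1 - y) * u) (1 - y) u := by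
      simpa using (hasDerivAt_id u).const_mul (1 - y)
    have h2 : HasDerivAt (fun u : ℝ => 1 - y * u) (-y) u := by
      simpa using ((hasDerivAt_id u).const_mul y).const_sub 1
    have h3 := h1.div h2 (ne_of_gt hd)
    have heq : ((1 - y) * (1 - y * u) - (1 - y) * u * -y) / (1 - y * u) ^ 2 = φ' u := by
      simp only [hφ']
      rw [div_eq_div_iff (pow_ne_zero 2 hd.ne') (pow_ne_zero 2 hd.ne')]
      ring
    exact heq ▸ h3
  have hinj : Set.InjOn φ (Set.Ioo 0 1) := by
    intro a ha b hb hab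
    have hda := hden a ha
    have hdb := hden b hb
    simp only [hφ] at hab
    field_simp at hab
    nlinarith [hab]
  have himg : φ '' Set.Ioo 0 1 = Set.Ioo 0 1 := by
    ext v
    constructor
    · rintro ⟨u, hu, rfl⟩
      have hd := hden u hu
      refine ⟨div_pos (mul_pos h1y hu.1) hd, ?_⟩
      rw [div_lt_one hd]
      nlinarith [hu.1, hu.2]
    · intro hv
      have h0 : (0:ℝ) < 1 - y + y * v := by nlinarith [hv.1, hv.2]
      refine ⟨v / (1 - y + y * v), ⟨div_pos hv.1 h0, ?_⟩, ?_⟩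
      · rw [div_lt_one h0]
        nlinarith [hv.1, hv.2]
      · simp only [hφ]
        have h1 : 1 - y * (v / (1 - y + y * v)) = (1 - y) / (1 - y + y * v) := by
          field_simp
          ring
        rw [h1]
        field_simp
  have hcov : ∫ v in Set.Ioo (0:ℝ) 1, g v = ∫ u in Set.Ioo (0:ℝ) 1, |φ' u| • g (φ u) :=
    calc ∫ v in Set.Ioo (0:ℝ) 1, g v = ∫ v in φ '' Set.Ioo (0:ℝ) 1, g v := by rw [himg]
    _ = _ := integral_image_eq_integral_abs_deriv_smul measurableSet_Ioo
        (fun u hu => (hderiv u hu).hasDerivWithinAt) hinj g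
  have hpt : Set.EqOn (fun u => |φ' u| • g (φ u))
      (fun u => (1 - y) ^ α * (u ^ (α - 1) * (1 - u) ^ (γ - α - 1) * (1 - x * u) ^ (-β) * (1 - y * u) ^ (-β')))
      (Set.Ioo 0 1) := by
    intro u hu
    have hd := hden u hu
    have hu0 : 0 < u := hu.1
    have hu1 : u < 1 := hu.2
    have hxu : (0:ℝ) < 1 - x * u := by nlinarith
    have habs : |φ' u| = (1 - y) / (1 - y * u) ^ 2 := abs_of_pos (div_pos h1y (pow_pos hd 2))
    have h1 : φ u = (1 - y) * u / (1 - y * u) := rfl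
    have h2 : 1 - φ u = (1 - u) / (1 - y * u) := by
      rw [h1]; field_simp; ring
    have h3 : 1 - c * φ u = (1 - x * u) / (1 - y * u) := by
      rw [h1, hc]; field_simp; ring
    simp only [smul_eq_mul, hg]
    rw [habs, h1, h2, h3]
    rw [Real.div_rpow (mul_pos h1y hu0).le hd.le, Real.div_rpow (by linarith : (0:ℝ) ≤ 1 - u) hd.le,
      Real.div_rpow hxu.le hd.le, Real.mul_rpow h1y.le hu0.le]
    have hA : (1 - y) * (1 - y) ^ (α - 1) = (1 - y) ^ α := by
      nth_rewrite 1 [← Real.rpow_one (1 - y)]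
      rw [← Real.rpow_add h1y]
      norm_num
    have hB : ((1 - y*u) ^ 2)⁻¹ * ((1 - y*u) ^ (α-1))⁻¹ * ((1 - y*u) ^ (γ-α-1))⁻¹ * ((1 - y*u) ^ (-β))⁻¹
        = (1 - y*u) ^ (-β') := by
      rw [← Real.rpow_natCast (1 - y*u) 2, ← Real.rpow_neg hd.le, ← Real.rpow_neg hd.le,
        ← Real.rpow_neg hd.le, ← Real.rpow_neg hd.le,
        ← Real.rpow_add hd, ← Real.rpow_add hd, ← Real.rpow_add hd]
      congr 1
      push_cast
      linarith
    calc (1 - y) / (1 - y*u) ^ 2 *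
          ((1 - y) ^ (α-1) * u ^ (α-1) / (1 - y*u) ^ (α-1) *
            ((1 - u) ^ (γ-α-1) / (1 - y*u) ^ (γ-α-1)) *
            ((1 - x*u) ^ (-β) / (1 - y*u) ^ (-β)))
        = ((1 - y) * (1 - y) ^ (α-1)) * (u ^ (α-1) * (1 - u) ^ (γ-α-1) * (1 - x*u) ^ (-β)) *
            (((1 - y*u) ^ 2)⁻¹ * ((1 - y*u) ^ (α-1))⁻¹ * ((1 - y*u) ^ (γ-α-1))⁻¹ *
              ((1 - y*u) ^ (-β))⁻¹) := by ring
      _ = _ := by rw [hA, hB]; ring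
  rw [intervalIntegral.integral_of_le zero_le_one, intervalIntegral.integral_of_le zero_le_one,
    MeasureTheory.integral_Ioc_eq_integral_Ioo, MeasureTheory.integral_Ioc_eq_integral_Ioo]
  have hfin : ∫ v in Set.Ioo (0:ℝ) 1, g v
      = (1 - y) ^ α * ∫ u in Set.Ioo (0:ℝ) 1,
          u ^ (α - 1) * (1 - u) ^ (γ - α - 1) * (1 - x * u) ^ (-β) * (1 - y * u) ^ (-β') := by
    rw [hcov, ← MeasureTheory.integral_const_mul]
    exact MeasureTheory.setIntegral_congr_fun measurableSet_Ioo hpt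
  rw [hfin, ← mul_assoc, ← Real.rpow_add h1y]
  norm_num
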